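/- Let c > 0 and let (t_j)_{j≥0} be a sequence of positive reals with ∑_{j=0}^∞ 1/t_j < ∞. The infinite product F(ξ) := ∏_{j=0}^∞ (sin(c t_j⁻¹ π ξ)/(c t_j⁻¹ π ξ))² (with each factor interpreted as 1 at ξ = 0) converges pointwise for every ξ ∈ ℝ, and the partial products converge in L¹(ℝ). -/
import Mathlib


open MeasureTheory Filter Real

/-- The `j`-th factor of the infinite product, interpreted as `1` at `ξ = 0`. -/
noncomputable def factor (c : ℝ) (t : ℕ → ℝ) (j : ℕ) (ξ : ℝ) : ℝ :=
  if ξ = 0 then 1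
  else (Real.sin (c * (t j)⁻¹ * Real.pi * ξ) / (c * (t j)⁻¹ * Real.pi * ξ)) ^ 2

lemma factor_nonneg (c : ℝ) (t : ℕ → ℝ) (j : ℕ) (ξ : ℝ) : 0 ≤ factor c t j ξ := by
  unfold factor
  split
  · norm_num
  · positivity

lemma factor_le_one (c : ℝ) (t : ℕ → ℝ) (j : ℕ) (ξ : ℝ) : factor c t j ξ ≤ 1 := by
  unfold factor
  split
  · exact le_refl 1
  · set y := c * (t j)⁻¹ * Real.pi * ξ with hy
    rcases eq_or_ne y 0 with h0 | h0
    · simp [h0]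
    · rw [div_pow, div_le_one (by positivity)]
      exact Real.sin_sq_le_sq

lemma factor_measurable (c : ℝ) (t : ℕ → ℝ) (j : ℕ) : Measurable (factor c t j) := by
  unfold factor
  refine Measurable.ite ?_ measurable_const ?_
  · simpa [Set.setOf_eq_eq_singleton] using measurableSet_singleton (0 : ℝ)
  · fun_prop

lemma factor_le_bound (c : ℝ) (t : ℕ → ℝ) (j : ℕ) (ξ : ℝ) (hc : 0 < c) (ht : 0 < t j) :
    factor c t j ξ ≤ 2 / (1 + (c * (t j)⁻¹ * Real.pi * ξ) ^ 2) := by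
  set y := c * (t j)⁻¹ * Real.pi * ξ with hy
  have hd : (0:ℝ) < 1 + y ^ 2 := by positivity
  unfold factor
  split
  · rename_i h
    have : y = 0 := by rw [hy, h, mul_zero]
    rw [this]
    norm_num
  · rename_i h
    have hy0 : y ≠ 0 := by
      have : 0 < c * (t j)⁻¹ * Real.pi := by positivity
      exact mul_ne_zero this.ne' h
    rw [← hy, div_pow, div_le_div_iff₀ (by positivity) hd]
    have h1 : Real.sin y ^ 2 ≤ y ^ 2 := Real.sin_sq_le_sq
    have h2 : Real.sin y ^ 2 ≤ 1 := Real.sin_sq_le_one y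
    nlinarith [sq_nonneg y, sq_nonneg (Real.sin y)]

theorem stmt10 (c : ℝ) (hc : 0 < c) (t : ℕ → ℝ) (ht : ∀ j, 0 < t j)
    (hsum : Summable fun j => 1 / t j) :
    (∀ ξ : ℝ, ∃ L : ℝ,
        Tendsto (fun M : ℕ => ∏ j ∈ Finset.range M, factor c t j ξ) atTop (nhds L)) ∧
      ∃ F : ℝ → ℝ, Integrable F ∧
        Tendsto (fun M : ℕ => ∫ ξ : ℝ, |(∏ j ∈ Finset.range M, factor c t j ξ) - F ξ|)
          atTop (nhds 0) := by
  set P : ℕ → ℝ → ℝ := fun M ξ => ∏ j ∈ Finset.range M, factor c t j ξ with hP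
  have hPnonneg : ∀ M ξ, 0 ≤ P M ξ := fun M ξ =>
    Finset.prod_nonneg fun j _ => factor_nonneg c t j ξ
  have hPanti : ∀ ξ, Antitone fun M => P M ξ := by
    intro ξ
    apply antitone_nat_of_succ_le
    intro n
    show P (n + 1) ξ ≤ P n ξ
    rw [hP]
    simp only
    rw [Finset.prod_range_succ]
    calc (∏ j ∈ Finset.range n, factor c t j ξ) * factor c t n ξ
        ≤ (∏ j ∈ Finset.range n, factor c t j ξ) * 1 :=
          mul_le_mul_of_nonneg_left (factor_le_one c t n ξ) (hPnonneg n ξ)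
      _ = ∏ j ∈ Finset.range n, factor c t j ξ := mul_one _
  have hbdd : ∀ ξ, BddBelow (Set.range fun M => P M ξ) := by
    intro ξ
    refine ⟨0, ?_⟩
    rintro x ⟨M, rfl⟩
    exact hPnonneg M ξ
  set F : ℝ → ℝ := fun ξ => ⨅ M, P M ξ with hF
  have htend : ∀ ξ, Tendsto (fun M => P M ξ) atTop (nhds (F ξ)) := fun ξ =>
    tendsto_atTop_ciInf (hPanti ξ) (hbdd ξ)
  have hFnonneg : ∀ ξ, 0 ≤ F ξ := fun ξ => le_ciInf fun M => hPnonneg M ξ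
  have hFle : ∀ M ξ, F ξ ≤ P M ξ := fun M ξ => ciInf_le (hbdd ξ) M
  -- the dominating function
  set G : ℝ → ℝ := fun ξ => 2 / (1 + (c * (t 0)⁻¹ * Real.pi * ξ) ^ 2) with hG
  have ha : c * (t 0)⁻¹ * Real.pi ≠ 0 := by
    have : 0 < c * (t 0)⁻¹ * Real.pi := by
      have := ht 0
      positivity
    exact this.ne'
  have hGint : Integrable G := by
    have h1 : Integrable fun x : ℝ => (1 + x ^ 2)⁻¹ := integrable_inv_one_add_sq
    have h2 : Integrable fun ξ : ℝ => (1 + (c * (t 0)⁻¹ * Real.pi * ξ) ^ 2)⁻¹ :=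
      h1.comp_mul_left' ha
    have := h2.const_mul 2
    refine this.congr ?_
    filter_upwards with ξ
    simp only [hG, div_eq_mul_inv]
  have hPleG : ∀ M ξ, P (M + 1) ξ ≤ G ξ := by
    intro M ξ
    calc P (M + 1) ξ ≤ P 1 ξ := hPanti ξ (Nat.one_le_iff_ne_zero.mpr (Nat.succ_ne_zero M))
      _ = factor c t 0 ξ := by rw [hP]; exact Finset.prod_range_one _
      _ ≤ G ξ := factor_le_bound c t 0 ξ hc (ht 0)
  have hPmeas : ∀ M, Measurable (P M) := by
    intro M
    apply Finset.measurable_prod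
    intro j _
    exact factor_measurable c t j
  have hFmeas : Measurable F :=
    measurable_of_tendsto_metrizable hPmeas (tendsto_pi_nhds.mpr htend)
  have hFint : Integrable F := by
    refine Integrable.mono' hGint hFmeas.aestronglyMeasurable ?_
    filter_upwards with ξ
    rw [Real.norm_eq_abs, abs_of_nonneg (hFnonneg ξ)]
    exact le_trans (hFle 1 ξ) (by simpa using hPleG 0 ξ)
  refine ⟨fun ξ => ⟨F ξ, htend ξ⟩, F, hFint, ?_⟩
  have hDCT : Tendsto (fun M : ℕ => ∫ ξ : ℝ, |P (M + 1) ξ - F ξ|) atTop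
      (nhds (∫ _ : ℝ, (0 : ℝ))) := by
    apply tendsto_integral_of_dominated_convergence G
    · intro n
      exact (((hPmeas (n + 1)).sub hFmeas).abs).aestronglyMeasurable
    · exact hGint
    · intro n
      filter_upwards with ξ
      rw [Real.norm_eq_abs, abs_abs, abs_of_nonneg (sub_nonneg.mpr (hFle (n + 1) ξ))]
      linarith [hFnonneg ξ, hPleG n ξ]
    · filter_upwards with ξ
      have h0 : Tendsto (fun M => |P M ξ - F ξ|) atTop (nhds 0) := by
        have := ((htend ξ).sub_const (F ξ)).abs
        simpa using this
      exact h0.comp (tendsto_add_atTop_nat 1)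
  rw [integral_zero] at hDCT
  exact (tendsto_add_atTop_iff_nat 1).mp hDCT
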